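/- arXiv:1101.1666 — 2 statements merged into one kernel-verified Lean document; each statement's English description precedes it below -/
import Mathlib

section
/- Let w be a Gog word of size n with corresponding monotone triangle a, and let 1 ≤ i ≤ n-1. Assume w does not contain a 312-subpattern at any position less than i. Then w contains a 312-subpattern at position i if and only if there exists j such that the monotone triangle a has a gap at row i, i.e., a_{i,j} - a_{i+1,j} > 1. -/
/-- `v` occurs at an odd-numbered (1-indexed) position of the tuple `t`
(modelled as a list; position `j+1` is odd iff the 0-based index `j` is even). -/
def OddPos (t : List ℕ) (v : ℕ) : Prop :=
  ∃ j, j < t.length ∧ j % 2 = 0 ∧ t.getD j 0 = v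

/-- `v` occurs at an even-numbered (1-indexed) position of the tuple `t`. -/
def EvenPos (t : List ℕ) (v : ℕ) : Prop :=
  ∃ j, j < t.length ∧ j % 2 = 1 ∧ t.getD j 0 = v

/-- A Gog word of size `n`: a sequence `x 1, …, x n` of strictly increasing tuples of
odd length, with entries in `{1, …, n}`, such that every integer occurring in an
even-numbered position of some tuple also occurs at an odd-numbered position of an
earlier and of a later tuple, and the successive occurrences of any repeated integer
alternate between odd- and even-numbered positions. -/
def IsGogWord (n : ℕ) (x : ℕ → List ℕ) : Prop :=
  (∀ i, 1 ≤ i → i ≤ n → (x i).length % 2 = 1) ∧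
  (∀ i, 1 ≤ i → i ≤ n → List.Pairwise (· < ·) (x i)) ∧
  (∀ i, 1 ≤ i → i ≤ n → ∀ v ∈ x i, 1 ≤ v ∧ v ≤ n) ∧
  (∀ i, 1 ≤ i → i ≤ n → ∀ v, EvenPos (x i) v →
     (∃ i', 1 ≤ i' ∧ i' < i ∧ OddPos (x i') v) ∧
     (∃ i', i < i' ∧ i' ≤ n ∧ OddPos (x i') v)) ∧
  (∀ v i i', 1 ≤ i → i < i' → i' ≤ n → v ∈ x i → v ∈ x i' →
     (∀ l, i < l → l < i' → v ∉ x l) → (OddPos (x i) v ↔ ¬ OddPos (x i') v))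

/-- `m` is active with respect to the tuple `t = (p 1, q 1, …, p (k-1), q (k-1), p k)`
if `m > p k` (the last entry) or `p j < m < q j` for some `j ≤ k - 1`. -/
def ActiveWrt (t : List ℕ) (m : ℕ) : Prop :=
  t.getD (t.length - 1) 0 < m ∨
  ∃ j, 2 * j + 1 < t.length ∧ t.getD (2 * j) 0 < m ∧ m < t.getD (2 * j + 1) 0

/-- The integers `(c, a, b)` form a 312-subpattern of the Gog word `x` at positions
`(i, j, k)`: `i < j < k`; `c, a, b` appear at odd-numbered positions of
`x i, x j, x k` respectively; `b` is not at an even-numbered position of any of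
`x (i+1), …, x (k-1)`; `b` is active with respect to `x j`; and `a < b < c`. -/
def Is312At (x : ℕ → List ℕ) (c a b : ℕ) (i j k : ℕ) : Prop :=
  i < j ∧ j < k ∧
  OddPos (x i) c ∧ OddPos (x j) a ∧ OddPos (x k) b ∧
  (∀ l, i < l → l < k → ¬ EvenPos (x l) b) ∧
  ActiveWrt (x j) b ∧ a < b ∧ b < c

/-- `a` is the monotone triangle corresponding to the Gog word `x` of size `n`:
each row is strictly increasing, row 1 consists of the single entry of `x 1`, and
(as a set) row `i+1` is obtained from row `i` by removing the entries at
even-numbered positions of `x (i+1)` and adjoining those at odd-numbered positions. -/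
def GogTriangle (n : ℕ) (x : ℕ → List ℕ) (a : ℕ → ℕ → ℕ) : Prop :=
  (∀ i, 1 ≤ i → i ≤ n → ∀ j j', 1 ≤ j → j < j' → j' ≤ i → a i j < a i j') ∧
  (1 ≤ n → a 1 1 = (x 1).getD 0 0) ∧
  (∀ i, 1 ≤ i → i + 1 ≤ n →
    {v | ∃ j, 1 ≤ j ∧ j ≤ i + 1 ∧ a (i + 1) j = v} =
      ({v | ∃ j, 1 ≤ j ∧ j ≤ i ∧ a i j = v} \ {v | EvenPos (x (i + 1)) v}) ∪
        {v | OddPos (x (i + 1)) v})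

/-- A set of natural numbers consists of consecutive integers if it is an interval
`{m, m+1, …, M}`. -/
def ConsecSet (S : Set ℕ) : Prop := ∃ m M, S = Set.Icc m M

namespace Gog312

lemma getD_lt {u : List ℕ} (hs : List.Pairwise (· < ·) u) {m m' : ℕ}
    (hmm : m < m') (hm' : m' < u.length) : u.getD m 0 < u.getD m' 0 := by
  have hm : m < u.length := lt_trans hmm hm'
  rw [List.getD_eq_getElem u 0 hm, List.getD_eq_getElem u 0 hm']
  exact List.pairwise_iff_getElem.mp hs m m' hm hm' hmm

lemma getD_mem {u : List ℕ} {m : ℕ} (hm : m < u.length) : u.getD m 0 ∈ u := by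
  rw [List.getD_eq_getElem u 0 hm]
  exact List.getElem_mem hm

lemma mem_idx {u : List ℕ} {v : ℕ} (h : v ∈ u) : ∃ m, m < u.length ∧ u.getD m 0 = v := by
  obtain ⟨m, hm, he⟩ := List.mem_iff_getElem.mp h
  exact ⟨m, hm, by rw [List.getD_eq_getElem u 0 hm]; exact he⟩

lemma oddPos_mem {u : List ℕ} {v : ℕ} (h : OddPos u v) : v ∈ u := by
  obtain ⟨m, hm, _, he⟩ := h
  exact he ▸ getD_mem hm

lemma evenPos_mem {u : List ℕ} {v : ℕ} (h : EvenPos u v) : v ∈ u := by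
  obtain ⟨m, hm, _, he⟩ := h
  exact he ▸ getD_mem hm

lemma pos_split {u : List ℕ} {v : ℕ} (h : v ∈ u) : OddPos u v ∨ EvenPos u v := by
  obtain ⟨m, hm, he⟩ := mem_idx h
  rcases Nat.mod_two_eq_zero_or_one m with h0 | h1
  · exact Or.inl ⟨m, hm, h0, he⟩
  · exact Or.inr ⟨m, hm, h1, he⟩

lemma not_odd_even {u : List ℕ} {v : ℕ} (hs : List.Pairwise (· < ·) u)
    (h1 : OddPos u v) (h2 : EvenPos u v) : False := by
  obtain ⟨m, hm, hp, he⟩ := h1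
  obtain ⟨m', hm', hp', he'⟩ := h2
  have hne : m ≠ m' := by omega
  rcases lt_or_gt_of_ne hne with h | h
  · have := getD_lt hs h hm'; omega
  · have := getD_lt hs h hm; omega

def cnt (u : List ℕ) (s : ℕ) : ℕ :=
  ((Finset.range u.length).filter (fun m => u.getD m 0 ≤ s)).card

lemma cnt_le (u : List ℕ) (s : ℕ) : cnt u s ≤ u.length := by
  have := Finset.card_filter_le (Finset.range u.length) (fun m => u.getD m 0 ≤ s)
  simpa [cnt] using this

lemma getD_le_iff {u : List ℕ} (hs : List.Pairwise (· < ·) u) {m s : ℕ} (hm : m < u.length) :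
    u.getD m 0 ≤ s ↔ m < cnt u s := by
  constructor
  · intro h
    have hsub : Finset.range (m+1) ⊆ (Finset.range u.length).filter (fun m' => u.getD m' 0 ≤ s) := by
      intro m' hm'
      simp only [Finset.mem_range] at hm'
      simp only [Finset.mem_filter, Finset.mem_range]
      refine ⟨by omega, ?_⟩
      rcases eq_or_lt_of_le (Nat.lt_succ_iff.mp hm') with rfl | hlt
      · exact h
      · exact le_of_lt (lt_of_lt_of_le (getD_lt hs hlt hm) h)
    have := Finset.card_le_card hsub
    rw [Finset.card_range] at this
    unfold cnt
    omega
  · intro h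
    by_contra hc
    have hsub : (Finset.range u.length).filter (fun m' => u.getD m' 0 ≤ s) ⊆ Finset.range m := by
      intro m' hm'
      simp only [Finset.mem_filter, Finset.mem_range] at hm'
      simp only [Finset.mem_range]
      by_contra hge
      push_neg at hge
      rcases eq_or_lt_of_le hge with rfl | hlt
      · exact hc hm'.2
      · exact hc (le_of_lt (lt_of_lt_of_le (getD_lt hs hlt hm'.1) hm'.2))
    have h2 := Finset.card_le_card hsub
    rw [Finset.card_range] at h2
    unfold cnt at h
    omega

lemma cnt_congr {u : List ℕ} {b : ℕ} (hb : b ∉ u) (hb1 : 1 ≤ b) : cnt u b = cnt u (b - 1) := by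
  unfold cnt
  congr 1
  apply Finset.filter_congr
  intro m hm
  simp only [Finset.mem_range] at hm
  have hne : u.getD m 0 ≠ b := fun he => hb (he ▸ getD_mem hm)
  constructor <;> intro h <;> simp_all <;> omega

lemma cnt_full {u : List ℕ} {s : ℕ} (h : ∀ v ∈ u, v ≤ s) : cnt u s = u.length := by
  unfold cnt
  rw [Finset.filter_true_of_mem, Finset.card_range]
  intro m hm
  exact h _ (getD_mem (Finset.mem_range.mp hm))

lemma cnt_pos_exists {u : List ℕ} {s : ℕ} (h : 1 ≤ cnt u s) : ∃ e ∈ u, e ≤ s := by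
  have hne : ((Finset.range u.length).filter (fun m => u.getD m 0 ≤ s)).Nonempty := by
    rw [← Finset.card_pos]
    exact h
  obtain ⟨m, hm⟩ := hne
  simp only [Finset.mem_filter, Finset.mem_range] at hm
  exact ⟨u.getD m 0, getD_mem hm.1, hm.2⟩

lemma parity_count (N : ℕ) :
    ((Finset.range N).filter (fun m => m % 2 = 0)).card = (N + 1) / 2 ∧
    ((Finset.range N).filter (fun m => m % 2 = 1)).card = N / 2 := by
  induction N with
  | zero => simp
  | succ N ih =>
    obtain ⟨ih1, ih2⟩ := ih
    rw [Finset.range_add_one, Finset.filter_insert, Finset.filter_insert]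
    rcases Nat.mod_two_eq_zero_or_one N with h | h
    · rw [if_pos h, if_neg (by omega)]
      rw [Finset.card_insert_of_notMem (by simp)]
      omega
    · rw [if_neg (by omega), if_pos h]
      rw [Finset.card_insert_of_notMem (by simp)]
      omega


def Ofin (u : List ℕ) : Finset ℕ :=
  (((Finset.range u.length).filter (fun m => m % 2 = 0)).image (fun m => u.getD m 0))

def Efin (u : List ℕ) : Finset ℕ :=
  (((Finset.range u.length).filter (fun m => m % 2 = 1)).image (fun m => u.getD m 0))

lemma mem_Ofin {u : List ℕ} {v : ℕ} : v ∈ Ofin u ↔ OddPos u v := by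
  unfold Ofin OddPos
  simp only [Finset.mem_image, Finset.mem_filter, Finset.mem_range]
  constructor
  · rintro ⟨m, ⟨h1, h2⟩, h3⟩; exact ⟨m, h1, h2, h3⟩
  · rintro ⟨m, h1, h2, h3⟩; exact ⟨m, ⟨h1, h2⟩, h3⟩

lemma mem_Efin {u : List ℕ} {v : ℕ} : v ∈ Efin u ↔ EvenPos u v := by
  unfold Efin EvenPos
  simp only [Finset.mem_image, Finset.mem_filter, Finset.mem_range]
  constructor
  · rintro ⟨m, ⟨h1, h2⟩, h3⟩; exact ⟨m, h1, h2, h3⟩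
  · rintro ⟨m, h1, h2, h3⟩; exact ⟨m, ⟨h1, h2⟩, h3⟩

lemma getD_injOn {u : List ℕ} (hs : List.Pairwise (· < ·) u) {S : Finset ℕ}
    (hS : S ⊆ Finset.range u.length) : Set.InjOn (fun m => u.getD m 0) ↑S := by
  intro m hm m' hm' he
  have h1 : m < u.length := Finset.mem_range.mp (hS (Finset.mem_coe.mp hm))
  have h2 : m' < u.length := Finset.mem_range.mp (hS (Finset.mem_coe.mp hm'))
  by_contra hne
  rcases lt_or_gt_of_ne hne with h | h
  · have := getD_lt hs h h2; simp only at he; omega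
  · have := getD_lt hs h h1; simp only at he; omega

lemma card_Ofin_filter {u : List ℕ} (hs : List.Pairwise (· < ·) u) (s : ℕ) :
    ((Ofin u).filter (· ≤ s)).card = (cnt u s + 1) / 2 := by
  unfold Ofin
  rw [Finset.filter_image]
  rw [Finset.card_image_of_injOn (getD_injOn hs (by
    intro m hm
    simp only [Finset.mem_filter, Finset.mem_range] at hm ⊢
    exact hm.1.1))]
  rw [Finset.filter_filter]
  have heq : (Finset.range u.length).filter (fun m => m % 2 = 0 ∧ u.getD m 0 ≤ s)
      = (Finset.range (cnt u s)).filter (fun m => m % 2 = 0) := by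
    ext m
    simp only [Finset.mem_filter, Finset.mem_range]
    constructor
    · rintro ⟨hm, hp, hle⟩
      exact ⟨(getD_le_iff hs hm).mp hle, hp⟩
    · rintro ⟨hm, hp⟩
      have hmlen : m < u.length := lt_of_lt_of_le hm (cnt_le u s)
      exact ⟨hmlen, hp, (getD_le_iff hs hmlen).mpr hm⟩
  rw [heq, (parity_count (cnt u s)).1]

lemma card_Efin_filter {u : List ℕ} (hs : List.Pairwise (· < ·) u) (s : ℕ) :
    ((Efin u).filter (· ≤ s)).card = (cnt u s) / 2 := by
  unfold Efin
  rw [Finset.filter_image]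
  rw [Finset.card_image_of_injOn (getD_injOn hs (by
    intro m hm
    simp only [Finset.mem_filter, Finset.mem_range] at hm ⊢
    exact hm.1.1))]
  rw [Finset.filter_filter]
  have heq : (Finset.range u.length).filter (fun m => m % 2 = 1 ∧ u.getD m 0 ≤ s)
      = (Finset.range (cnt u s)).filter (fun m => m % 2 = 1) := by
    ext m
    simp only [Finset.mem_filter, Finset.mem_range]
    constructor
    · rintro ⟨hm, hp, hle⟩
      exact ⟨(getD_le_iff hs hm).mp hle, hp⟩
    · rintro ⟨hm, hp⟩
      have hmlen : m < u.length := lt_of_lt_of_le hm (cnt_le u s)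
      exact ⟨hmlen, hp, (getD_le_iff hs hmlen).mpr hm⟩
  rw [heq, (parity_count (cnt u s)).2]

lemma active_of_cnt {u : List ℕ} {b : ℕ} (hs : List.Pairwise (· < ·) u) (hb : b ∉ u)
    (hb1 : 1 ≤ b) (hodd : cnt u (b-1) % 2 = 1) : ActiveWrt u b := by
  have hcb : cnt u b = cnt u (b-1) := cnt_congr hb hb1
  have hcodd : cnt u b % 2 = 1 := by rw [hcb]; exact hodd
  have hcle : cnt u b ≤ u.length := cnt_le u b
  rcases eq_or_lt_of_le hcle with heq | hlt
  · left
    have hlen : 0 < u.length := by omega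
    have h2 := (getD_le_iff (s := b) hs (by omega : u.length - 1 < u.length)).mpr (by omega)
    have hne : u.getD (u.length - 1) 0 ≠ b := fun he => hb (he ▸ getD_mem (by omega))
    omega
  · right
    have hcpos : 1 ≤ cnt u b := by omega
    refine ⟨cnt u b / 2, by omega, ?_, ?_⟩
    · have h2 := (getD_le_iff (s := b) hs (by omega : 2 * (cnt u b / 2) < u.length)).mpr (by omega)
      have hne : u.getD (2 * (cnt u b / 2)) 0 ≠ b := fun he => hb (he ▸ getD_mem (by omega))
      omega
    · have h2 : ¬ (u.getD (2 * (cnt u b / 2) + 1) 0 ≤ b) := by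
        rw [getD_le_iff (s := b) hs (by omega : 2 * (cnt u b / 2) + 1 < u.length)]
        omega
      omega

lemma cnt_of_active {u : List ℕ} {b : ℕ} (hs : List.Pairwise (· < ·) u)
    (hlen : u.length % 2 = 1) (hpos : ∀ v ∈ u, 1 ≤ v)
    (hact : ActiveWrt u b) : cnt u (b-1) % 2 = 1 ∧ 2 ≤ b := by
  have hl0 : 0 < u.length := by omega
  rcases hact with h | ⟨j, hj, h1, h2⟩
  · have hb2 : 2 ≤ b := by
      have := hpos _ (getD_mem (by omega : u.length - 1 < u.length))
      omega
    have hfull : cnt u (b-1) = u.length := by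
      apply cnt_full
      intro v hv
      obtain ⟨m, hm, rfl⟩ := mem_idx hv
      have hle : u.getD m 0 ≤ u.getD (u.length - 1) 0 := by
        rcases eq_or_lt_of_le (by omega : m ≤ u.length - 1) with heq | hlt2
        · rw [heq]
        · exact le_of_lt (getD_lt hs hlt2 (by omega))
      omega
    rw [hfull]
    exact ⟨hlen, hb2⟩
  · have hb2 : 2 ≤ b := by
      have := hpos _ (getD_mem (by omega : 2 * j < u.length))
      omega
    refine ⟨?_, hb2⟩
    have hlow : 2 * j < cnt u (b-1) := by
      rw [← getD_le_iff hs (by omega : 2 * j < u.length)]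
      omega
    have hhigh : ¬ (2 * j + 1 < cnt u (b-1)) := by
      rw [← getD_le_iff hs hj]
      omega
    omega


def Rf (a : ℕ → ℕ → ℕ) (l : ℕ) : Finset ℕ := (Finset.Icc 1 l).image (a l)

lemma mem_Rf {a : ℕ → ℕ → ℕ} {l v : ℕ} : v ∈ Rf a l ↔ ∃ j, 1 ≤ j ∧ j ≤ l ∧ a l j = v := by
  unfold Rf
  simp only [Finset.mem_image, Finset.mem_Icc]
  constructor
  · rintro ⟨j, ⟨h1, h2⟩, h3⟩; exact ⟨j, h1, h2, h3⟩
  · rintro ⟨j, h1, h2, h3⟩; exact ⟨j, ⟨h1, h2⟩, h3⟩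

section Triangle

variable {n : ℕ} {x : ℕ → List ℕ} {a : ℕ → ℕ → ℕ}

lemma RfSucc (ha : GogTriangle n x a) {i : ℕ} (h1 : 1 ≤ i) (h2 : i + 1 ≤ n) :
    Rf a (i+1) = (Rf a i \ Efin (x (i+1))) ∪ Ofin (x (i+1)) := by
  have hset := ha.2.2 i h1 h2
  ext v
  have hv := Set.ext_iff.mp hset v
  simp only [Set.mem_union, Set.mem_diff, Set.mem_setOf_eq] at hv
  rw [Finset.mem_union, Finset.mem_sdiff, mem_Ofin, mem_Efin, mem_Rf, mem_Rf]
  exact hv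

lemma a_injOn (ha : GogTriangle n x a) {l : ℕ} (h1 : 1 ≤ l) (h2 : l ≤ n) :
    ∀ j ∈ Finset.Icc 1 l, ∀ j' ∈ Finset.Icc 1 l, a l j = a l j' → j = j' := by
  intro j hj j' hj' he
  rw [Finset.mem_Icc] at hj hj'
  by_contra hne
  rcases lt_or_gt_of_ne hne with h | h
  · have := ha.1 l h1 h2 j j' hj.1 h hj'.2; omega
  · have := ha.1 l h1 h2 j' j hj'.1 h hj.2; omega

lemma card_Rf (ha : GogTriangle n x a) {l : ℕ} (h1 : 1 ≤ l) (h2 : l ≤ n) :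
    (Rf a l).card = l := by
  unfold Rf
  rw [Finset.card_image_of_injOn (fun j hj j' hj' he =>
    a_injOn ha h1 h2 j (Finset.mem_coe.mp hj) j' (Finset.mem_coe.mp hj') he)]
  rw [Nat.card_Icc]
  omega

lemma Rf_pos (hw : IsGogWord n x) (ha : GogTriangle n x a) :
    ∀ l, 1 ≤ l → l ≤ n → ∀ v ∈ Rf a l, 1 ≤ v ∧ v ≤ n := by
  intro l h1
  induction l, h1 using Nat.le_induction with
  | base =>
    intro hn v hv
    rw [mem_Rf] at hv
    obtain ⟨j, hj1, hj2, he⟩ := hv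
    have hj : j = 1 := by omega
    subst hj
    have hlen : 0 < (x 1).length := by have := hw.1 1 le_rfl hn; omega
    have he2 : v = (x 1).getD 0 0 := by rw [← he, ha.2.1 hn]
    rw [he2]
    exact hw.2.2.1 1 le_rfl hn _ (getD_mem hlen)
  | succ i hi ih =>
    intro hn v hv
    rw [RfSucc ha hi hn] at hv
    rcases Finset.mem_union.mp hv with h | h
    · exact ih (by omega) v (Finset.mem_sdiff.mp h).1
    · rw [mem_Ofin] at h
      exact hw.2.2.1 (i+1) (by omega) hn v (oddPos_mem h)

lemma mem_of_odd (hw : IsGogWord n x) (ha : GogTriangle n x a) {l v : ℕ}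
    (h1 : 1 ≤ l) (h2 : l ≤ n) (h : OddPos (x l) v) : v ∈ Rf a l := by
  rcases Nat.lt_or_ge l 2 with hl | hl
  · have hl1 : l = 1 := by omega
    subst hl1
    have hv0 : v = (x 1).getD 0 0 := by
      obtain ⟨m, hm, hp, he⟩ := h
      rcases Nat.eq_zero_or_pos m with rfl | hpos
      · exact he.symm
      · have h1lt : 1 < (x 1).length := by omega
        have hev : EvenPos (x 1) ((x 1).getD 1 0) := ⟨1, h1lt, rfl, rfl⟩
        obtain ⟨⟨i', hi'1, hi'2, _⟩, _⟩ := hw.2.2.2.1 1 le_rfl h2 _ hev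
        omega
    rw [mem_Rf]
    exact ⟨1, le_rfl, le_rfl, by rw [ha.2.1 h2, hv0]⟩
  · obtain ⟨i, rfl⟩ : ∃ i, l = i + 1 := ⟨l - 1, by omega⟩
    rw [RfSucc ha (by omega) h2]
    exact Finset.mem_union_right _ (mem_Ofin.mpr h)

lemma not_mem_of_even (hw : IsGogWord n x) (ha : GogTriangle n x a) {i v : ℕ}
    (h1 : 1 ≤ i) (h2 : i + 1 ≤ n) (h : EvenPos (x (i+1)) v) : v ∉ Rf a (i+1) := by
  intro hmem
  rw [RfSucc ha h1 h2] at hmem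
  rcases Finset.mem_union.mp hmem with hm | hm
  · exact (Finset.mem_sdiff.mp hm).2 (mem_Efin.mpr h)
  · exact not_odd_even (hw.2.1 (i+1) (by omega) h2) (mem_Ofin.mp hm) h

lemma mem_succ_iff (hw : IsGogWord n x) (ha : GogTriangle n x a) {i v : ℕ}
    (h1 : 1 ≤ i) (h2 : i + 1 ≤ n) (hnm : v ∉ x (i+1)) :
    v ∈ Rf a (i+1) ↔ v ∈ Rf a i := by
  rw [RfSucc ha h1 h2, Finset.mem_union, Finset.mem_sdiff, mem_Ofin, mem_Efin]
  constructor
  · rintro (⟨h, _⟩ | h)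
    · exact h
    · exact absurd (oddPos_mem h) hnm
  · intro h
    exact Or.inl ⟨h, fun he => hnm (evenPos_mem he)⟩

lemma last_occ (x : ℕ → List ℕ) :
    ∀ i v, (∃ l, 1 ≤ l ∧ l ≤ i ∧ v ∈ x l) →
      ∃ l, 1 ≤ l ∧ l ≤ i ∧ v ∈ x l ∧ ∀ m, l < m → m ≤ i → v ∉ x m := by
  intro i
  induction i with
  | zero =>
    rintro v ⟨l, h1, h2, _⟩
    omega
  | succ i ih =>
    rintro v ⟨l, h1, h2, hm⟩
    by_cases hc : v ∈ x (i+1)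
    · exact ⟨i+1, by omega, le_rfl, hc, by intro m hm1 hm2 _; omega⟩
    · have hl : l ≤ i := by
        rcases eq_or_lt_of_le h2 with heq | hlt
        · subst heq; exact absurd hm hc
        · omega
      obtain ⟨l0, hl01, hl02, hl0m, htail⟩ := ih v ⟨l, h1, hl, hm⟩
      refine ⟨l0, hl01, by omega, hl0m, ?_⟩
      intro m hma hmb
      rcases eq_or_lt_of_le hmb with heq | hlt
      · subst heq; exact hc
      · exact htail m hma (by omega)

lemma persist_up (hw : IsGogWord n x) (ha : GogTriangle n x a) {v : ℕ} :
    ∀ l i, 1 ≤ l → l ≤ i → i ≤ n →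
      v ∈ Rf a l → (∀ m, l < m → m ≤ i → v ∉ x m) → v ∈ Rf a i := by
  intro l i h1 h2
  induction i, h2 using Nat.le_induction with
  | base => intro _ hv _; exact hv
  | succ i hli ih =>
    intro hn hv hocc
    have hvi : v ∈ Rf a i := ih (by omega) hv (fun m hm1 hm2 => hocc m hm1 (by omega))
    have hnm : v ∉ x (i+1) := hocc (i+1) (by omega) le_rfl
    exact (mem_succ_iff hw ha (by omega) hn hnm).mpr hvi

lemma last_odd (hw : IsGogWord n x) (ha : GogTriangle n x a) :
    ∀ i, 1 ≤ i → i ≤ n → ∀ v, v ∈ Rf a i →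
      ∃ l, 1 ≤ l ∧ l ≤ i ∧ OddPos (x l) v ∧ ∀ m, l < m → m ≤ i → v ∉ x m := by
  intro i h1
  induction i, h1 using Nat.le_induction with
  | base =>
    intro hn v hv
    refine ⟨1, le_rfl, le_rfl, ?_, by intro m hm1 hm2 _; omega⟩
    rw [mem_Rf] at hv
    obtain ⟨j, hj1, hj2, he⟩ := hv
    have hj : j = 1 := by omega
    subst hj
    have hlen : 0 < (x 1).length := by have := hw.1 1 le_rfl hn; omega
    exact ⟨0, hlen, rfl, by rw [← ha.2.1 hn, he]⟩
  | succ i hi ih =>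
    intro hn v hv
    by_cases hodd : OddPos (x (i+1)) v
    · exact ⟨i+1, by omega, le_rfl, hodd, by intro m hm1 hm2 _; omega⟩
    · rw [RfSucc ha hi hn] at hv
      have hvi : v ∈ Rf a i ∧ v ∉ Efin (x (i+1)) := by
        rcases Finset.mem_union.mp hv with h | h
        · exact Finset.mem_sdiff.mp h
        · exact absurd (mem_Ofin.mp h) hodd
      obtain ⟨l, hl1, hl2, hlo, hltail⟩ := ih (by omega) v hvi.1
      refine ⟨l, hl1, by omega, hlo, ?_⟩
      intro m hm1 hm2
      rcases eq_or_lt_of_le hm2 with heq | hlt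
      · subst heq
        intro hmem
        rcases pos_split hmem with h | h
        · exact hodd h
        · exact hvi.2 (mem_Efin.mpr h)
      · exact hltail m hm1 (by omega)

lemma odd_not_mem_prev (hw : IsGogWord n x) (ha : GogTriangle n x a) {i v : ℕ}
    (h1 : 1 ≤ i) (h2 : i + 1 ≤ n) (h : OddPos (x (i+1)) v) : v ∉ Rf a i := by
  intro hv
  obtain ⟨l, hl1, hl2, hlo, htail⟩ := last_odd hw ha i h1 (by omega) v hv
  have halt := hw.2.2.2.2 v l (i+1) hl1 (by omega) h2 (oddPos_mem hlo) (oddPos_mem h)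
    (fun m hm1 hm2 => htail m hm1 (by omega))
  exact (halt.mp hlo) h

lemma even_mem_prev (hw : IsGogWord n x) (ha : GogTriangle n x a) {i v : ℕ}
    (h1 : 1 ≤ i) (h2 : i + 1 ≤ n) (h : EvenPos (x (i+1)) v) : v ∈ Rf a i := by
  obtain ⟨⟨i0, hi01, hi02, hi0odd⟩, _⟩ := hw.2.2.2.1 (i+1) (by omega) h2 v h
  obtain ⟨l, hl1, hl2, hlmem, htail⟩ := last_occ x i v ⟨i0, hi01, by omega, oddPos_mem hi0odd⟩
  have halt := hw.2.2.2.2 v l (i+1) hl1 (by omega) h2 hlmem (evenPos_mem h)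
    (fun m hm1 hm2 => htail m hm1 (by omega))
  have hnodd : ¬ OddPos (x (i+1)) v := fun ho => not_odd_even (hw.2.1 (i+1) (by omega) h2) ho h
  have hlodd : OddPos (x l) v := halt.mpr hnodd
  exact persist_up hw ha l i hl1 hl2 (by omega) (mem_of_odd hw ha hl1 (by omega) hlodd) htail

lemma Rf_top (hw : IsGogWord n x) (ha : GogTriangle n x a) (hn : 1 ≤ n) :
    Rf a n = Finset.Icc 1 n := by
  apply Finset.eq_of_subset_of_card_le
  · intro v hv
    rw [Finset.mem_Icc]
    exact Rf_pos hw ha n hn le_rfl v hv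
  · rw [card_Rf ha hn le_rfl, Nat.card_Icc]
    omega

end Triangle


def fcnt (a : ℕ → ℕ → ℕ) (l t : ℕ) : ℕ :=
  ((Finset.Icc 1 l).filter (fun j => a l j ≤ t)).card

def Pat (x : ℕ → List ℕ) (a : ℕ → ℕ → ℕ) (l : ℕ) : Prop :=
  ∃ c a' b, OddPos (x l) c ∧ OddPos (x (l+1)) a' ∧ a' < b ∧ b < c ∧
    b ∉ Rf a l ∧ b ∉ Rf a (l+1) ∧ ActiveWrt (x (l+1)) b

def GapT (x : ℕ → List ℕ) (a : ℕ → ℕ → ℕ) (l : ℕ) : Prop :=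
  ∃ b, 2 ≤ b ∧ b ∉ Rf a l ∧ b ∉ Rf a (l+1) ∧ (∃ v ∈ Rf a l, b < v) ∧
    cnt (x (l+1)) (b-1) % 2 = 1

section Triangle2

variable {n : ℕ} {x : ℕ → List ℕ} {a : ℕ → ℕ → ℕ}

lemma fcnt_eq (ha : GogTriangle n x a) {l : ℕ} (h1 : 1 ≤ l) (h2 : l ≤ n) (t : ℕ) :
    fcnt a l t = ((Rf a l).filter (· ≤ t)).card := by
  have hinj : Set.InjOn (a l) ↑((Finset.Icc 1 l).filter (fun j => a l j ≤ t)) := by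
    intro j hj j' hj' he
    have hj2 := Finset.mem_filter.mp (Finset.mem_coe.mp hj)
    have hj2' := Finset.mem_filter.mp (Finset.mem_coe.mp hj')
    exact a_injOn ha h1 h2 j hj2.1 j' hj2'.1 he
  unfold fcnt Rf
  rw [Finset.filter_image, Finset.card_image_of_injOn hinj]

lemma a_le_iff (ha : GogTriangle n x a) {l j t : ℕ}
    (h1 : 1 ≤ l) (h2 : l ≤ n) (hj1 : 1 ≤ j) (hj2 : j ≤ l) :
    a l j ≤ t ↔ j ≤ fcnt a l t := by
  constructor
  · intro h
    have hsub : Finset.Icc 1 j ⊆ (Finset.Icc 1 l).filter (fun j' => a l j' ≤ t) := by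
      intro j' hj'
      rw [Finset.mem_Icc] at hj'
      rw [Finset.mem_filter, Finset.mem_Icc]
      refine ⟨⟨hj'.1, by omega⟩, ?_⟩
      rcases eq_or_lt_of_le hj'.2 with heq | hlt
      · rw [heq]; exact h
      · exact le_trans (le_of_lt (ha.1 l h1 h2 j' j hj'.1 hlt hj2)) h
    have hc := Finset.card_le_card hsub
    rw [Nat.card_Icc] at hc
    unfold fcnt
    omega
  · intro h
    by_contra hcon
    have hsub : (Finset.Icc 1 l).filter (fun j' => a l j' ≤ t) ⊆ Finset.Icc 1 (j-1) := by
      intro j' hj'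
      rw [Finset.mem_filter, Finset.mem_Icc] at hj'
      rw [Finset.mem_Icc]
      refine ⟨hj'.1.1, ?_⟩
      by_contra hge
      push_neg at hge
      have hjj' : j ≤ j' := by omega
      rcases eq_or_lt_of_le hjj' with heq | hlt
      · exact hcon (by rw [heq]; exact hj'.2)
      · have := ha.1 l h1 h2 j j' hj1 hlt hj'.1.2
        omega
    have hc := Finset.card_le_card hsub
    rw [Nat.card_Icc] at hc
    unfold fcnt at h
    omega

lemma fcnt_lt_of_mem (ha : GogTriangle n x a) {l b : ℕ} (h1 : 1 ≤ l) (h2 : l ≤ n)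
    (hb : b ∈ Rf a l) (hb1 : 1 ≤ b) : fcnt a l (b-1) < fcnt a l b := by
  obtain ⟨j0, hj01, hj02, hj0e⟩ := mem_Rf.mp hb
  apply Finset.card_lt_card
  rw [Finset.ssubset_iff_of_subset (Finset.monotone_filter_right _ (fun j _ (h : a l j ≤ b - 1) => by omega))]
  refine ⟨j0, Finset.mem_filter.mpr ⟨Finset.mem_Icc.mpr ⟨hj01, hj02⟩, by omega⟩, ?_⟩
  intro hmem
  rw [Finset.mem_filter] at hmem
  omega

lemma fcnt_congr (ha : GogTriangle n x a) {l b : ℕ} (h1 : 1 ≤ l) (h2 : l ≤ n)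
    (hb : b ∉ Rf a l) (hb1 : 1 ≤ b) : fcnt a l b = fcnt a l (b-1) := by
  unfold fcnt
  congr 1
  apply Finset.filter_congr
  intro j hj
  rw [Finset.mem_Icc] at hj
  have hne : a l j ≠ b := fun he => hb (mem_Rf.mpr ⟨j, hj.1, hj.2, he⟩)
  constructor <;> intro h <;> simp_all <;> omega

lemma fcnt_lt_of_above (ha : GogTriangle n x a) {l b v : ℕ} (h1 : 1 ≤ l) (h2 : l ≤ n)
    (hv : v ∈ Rf a l) (hbv : b < v) : fcnt a l b < l := by
  obtain ⟨j0, hj01, hj02, hj0e⟩ := mem_Rf.mp hv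
  have hsub : (Finset.Icc 1 l).filter (fun j => a l j ≤ b) ⊆ (Finset.Icc 1 l).erase j0 := by
    intro j hj
    rw [Finset.mem_filter] at hj
    rw [Finset.mem_erase]
    refine ⟨?_, hj.1⟩
    intro heq
    subst heq
    omega
  have hc := Finset.card_le_card hsub
  rw [Finset.card_erase_of_mem (Finset.mem_Icc.mpr ⟨hj01, hj02⟩), Nat.card_Icc] at hc
  unfold fcnt
  omega

lemma fcnt_trans (hw : IsGogWord n x) (ha : GogTriangle n x a) {i : ℕ}
    (h1 : 1 ≤ i) (h2 : i + 1 ≤ n) (t : ℕ) :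
    fcnt a (i+1) t = fcnt a i t + (cnt (x (i+1)) t) % 2 := by
  have hs := hw.2.1 (i+1) (by omega) h2
  have hOE : Efin (x (i+1)) ⊆ Rf a i := fun v hv => even_mem_prev hw ha h1 h2 (mem_Efin.mp hv)
  have hOD : Disjoint (Ofin (x (i+1))) (Rf a i) := by
    rw [Finset.disjoint_left]
    intro v hv hv2
    exact odd_not_mem_prev hw ha h1 h2 (mem_Ofin.mp hv) hv2
  rw [fcnt_eq ha (by omega) h2 t, fcnt_eq ha h1 (by omega) t, RfSucc ha h1 h2]
  rw [Finset.filter_union]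
  have hsd : (Rf a i \ Efin (x (i+1))).filter (· ≤ t)
      = (Rf a i).filter (· ≤ t) \ (Efin (x (i+1))).filter (· ≤ t) := by
    ext v
    simp only [Finset.mem_filter, Finset.mem_sdiff]
    tauto
  have hBsub : (Efin (x (i+1))).filter (· ≤ t) ⊆ (Rf a i).filter (· ≤ t) :=
    Finset.filter_subset_filter _ hOE
  have hdisj : Disjoint ((Rf a i).filter (· ≤ t) \ (Efin (x (i+1))).filter (· ≤ t))
      ((Ofin (x (i+1))).filter (· ≤ t)) := by
    rw [Finset.disjoint_right]
    intro v hv hv2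
    rw [Finset.mem_filter] at hv
    rw [Finset.mem_sdiff, Finset.mem_filter] at hv2
    exact (Finset.disjoint_left.mp hOD hv.1) hv2.1.1
  rw [hsd, Finset.card_union_of_disjoint hdisj, Finset.card_sdiff_of_subset hBsub]
  rw [card_Ofin_filter hs t, card_Efin_filter hs t]
  have hle : (cnt (x (i+1)) t) / 2 ≤ ((Rf a i).filter (· ≤ t)).card := by
    have := Finset.card_le_card hBsub
    rw [card_Efin_filter hs t] at this
    exact this
  omega

lemma pat_to_312 (hw : IsGogWord n x) (ha : GogTriangle n x a) {l : ℕ}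
    (h1 : 1 ≤ l) (h2 : l + 1 ≤ n) (hp : Pat x a l) :
    ∃ c a' b k, k ≤ n ∧ Is312At x c a' b l (l+1) k := by
  obtain ⟨c, a', b, hc, ha', hab, hbc, hbl, hbl1, hact⟩ := hp
  have hn1 : 1 ≤ n := by omega
  have hb1 : 1 ≤ b := by
    have := (hw.2.2.1 (l+1) (by omega) h2 a' (oddPos_mem ha')).1
    omega
  have hbn : b ≤ n := by
    have := (hw.2.2.1 l h1 (by omega) c (oddPos_mem hc)).2
    omega
  have hbRn : b ∈ Rf a n := by
    rw [Rf_top hw ha hn1]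
    exact Finset.mem_Icc.mpr ⟨hb1, hbn⟩
  have hln : l + 1 < n := by
    rcases eq_or_lt_of_le h2 with heq | hlt
    · rw [← heq] at hbRn; exact absurd hbRn hbl1
    · exact hlt
  have hex : ∃ k, l + 1 < k ∧ k ≤ n ∧ b ∈ Rf a k := ⟨n, hln, le_rfl, hbRn⟩
  have hK := Nat.find_spec hex
  have hnotin : ∀ m, l + 1 ≤ m → m < Nat.find hex → b ∉ Rf a m := by
    intro m hm1 hm2 hmem
    rcases eq_or_lt_of_le hm1 with heq | hlt
    · rw [← heq] at hmem; exact hbl1 hmem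
    · exact (Nat.find_min hex hm2) ⟨hlt, by omega, hmem⟩
  obtain ⟨k', hkeq⟩ : ∃ k', Nat.find hex = k' + 1 := ⟨Nat.find hex - 1, by omega⟩
  have hK3 : b ∈ Rf a (k'+1) := by rw [← hkeq]; exact hK.2.2
  have hk'1 : l + 1 ≤ k' := by omega
  have hk'2 : k' + 1 ≤ n := by omega
  have hbk' : b ∉ Rf a k' := hnotin k' hk'1 (by omega)
  have hbx : b ∈ x (k'+1) := by
    by_contra hnx
    exact hbk' ((mem_succ_iff hw ha (by omega) hk'2 hnx).mp hK3)
  have hbodd : OddPos (x (k'+1)) b := by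
    rcases pos_split hbx with h | h
    · exact h
    · exact absurd hK3 (not_mem_of_even hw ha (by omega) hk'2 h)
  have hnoev : ∀ m, l < m → m < k' + 1 → ¬ EvenPos (x m) b := by
    intro m hm1 hm2 hev
    obtain ⟨m', rfl⟩ : ∃ m', m = m' + 1 := ⟨m - 1, by omega⟩
    have hmem := even_mem_prev hw ha (by omega : 1 ≤ m') (by omega : m' + 1 ≤ n) hev
    rcases eq_or_lt_of_le (by omega : l ≤ m') with heq | hlt
    · rw [← heq] at hmem; exact hbl hmem
    · exact hnotin m' (by omega) (by omega) hmem
  exact ⟨c, a', b, k'+1, by omega, by omega, by omega, hc, ha', hbodd, hnoev, hact, hab, hbc⟩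

lemma p312_to_pat (hw : IsGogWord n x) (ha : GogTriangle n x a) {l k c a' b : ℕ}
    (h1 : 1 ≤ l) (hkn : k ≤ n) (h : Is312At x c a' b l (l+1) k) : Pat x a l := by
  obtain ⟨_, hlk, hc, ha', hbk, hnoev, hact, hab, hbc⟩ := h
  have hnx : ∀ m, l < m → m < k → b ∉ x m := by
    intro m hm1 hm2 hmem
    obtain ⟨l0, hl01, hl02, hl0mem, htail⟩ := last_occ x (k-1) b ⟨m, by omega, by omega, hmem⟩
    have hl0m : m ≤ l0 := by
      by_contra hx
      push_neg at hx
      exact htail m hx (by omega) hmem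
    have halt := hw.2.2.2.2 b l0 k hl01 (by omega) hkn hl0mem (oddPos_mem hbk)
      (fun m' hm'1 hm'2 => htail m' hm'1 (by omega))
    have hnodd : ¬ OddPos (x l0) b := fun ho => (halt.mp ho) hbk
    rcases pos_split hl0mem with ho | he
    · exact hnodd ho
    · exact hnoev l0 (by omega) (by omega) he
  have hkk : k - 1 + 1 = k := by omega
  have hbk1 : b ∉ Rf a (k-1) := by
    apply odd_not_mem_prev hw ha (by omega : 1 ≤ k - 1) (by omega : k - 1 + 1 ≤ n)
    rw [hkk]
    exact hbk
  have hdown : ∀ d m, m + d = k - 1 → l ≤ m → b ∉ Rf a m := by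
    intro d
    induction d with
    | zero =>
      intro m hm _
      have hmk : m = k - 1 := by omega
      rw [hmk]
      exact hbk1
    | succ d ihd =>
      intro m hm hlm
      have hnext : b ∉ Rf a (m+1) := ihd (m+1) (by omega) (by omega)
      have hnm : b ∉ x (m+1) := hnx (m+1) (by omega) (by omega)
      intro hmem
      exact hnext ((mem_succ_iff hw ha (by omega) (by omega) hnm).mpr hmem)
  exact ⟨c, a', b, hc, ha', hab, hbc, hdown (k-1-l) l (by omega) le_rfl,
    hdown (k-1-(l+1)) (l+1) (by omega) (by omega), hact⟩

lemma gapT_to_gap (hw : IsGogWord n x) (ha : GogTriangle n x a) {i : ℕ}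
    (h1 : 1 ≤ i) (h2 : i + 1 ≤ n) (hg : GapT x a i) :
    ∃ j, 1 ≤ j ∧ j ≤ i ∧ a (i+1) j + 1 < a i j := by
  obtain ⟨b, hb2, hbi, hbi1, ⟨v, hv, hbv⟩, hodd⟩ := hg
  have ht := fcnt_trans hw ha h1 h2 (b-1)
  have hcongr := fcnt_congr ha h1 (by omega) hbi (by omega)
  have habove := fcnt_lt_of_above ha h1 (by omega) hv hbv
  refine ⟨fcnt a i b + 1, by omega, by omega, ?_⟩
  have hup : a (i+1) (fcnt a i b + 1) ≤ b - 1 := by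
    rw [a_le_iff ha (by omega) h2 (by omega) (by omega)]
    omega
  have hlow : ¬ (a i (fcnt a i b + 1) ≤ b) := by
    rw [a_le_iff ha h1 (by omega) (by omega) (by omega)]
    omega
  omega

lemma gap_to_gapT (hw : IsGogWord n x) (ha : GogTriangle n x a) {i j : ℕ}
    (h1 : 1 ≤ i) (h2 : i + 1 ≤ n) (hj1 : 1 ≤ j) (hj2 : j ≤ i)
    (hgap : a (i+1) j + 1 < a i j) : GapT x a i := by
  have haij1 : 1 ≤ a (i+1) j :=
    (Rf_pos hw ha (i+1) (by omega) h2 _ (mem_Rf.mpr ⟨j, hj1, by omega, rfl⟩)).1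
  set t0 := a i j - 1 with ht0def
  have ht01 : 1 ≤ t0 := by omega
  have hC : fcnt a i t0 < fcnt a (i+1) (t0 - 1) := by
    have hup : j ≤ fcnt a (i+1) (t0-1) := by
      rw [← a_le_iff ha (by omega) h2 hj1 (by omega)]
      omega
    have hlow : fcnt a i t0 < j := by
      have hni : ¬ (a i j ≤ t0) := by omega
      rw [a_le_iff ha h1 (by omega) hj1 hj2] at hni
      omega
    omega
  have htrb : fcnt a (i+1) t0 = fcnt a i t0 + cnt (x (i+1)) t0 % 2 := fcnt_trans hw ha h1 h2 t0
  have htrb1 : fcnt a (i+1) (t0-1) = fcnt a i (t0-1) + cnt (x (i+1)) (t0-1) % 2 :=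
    fcnt_trans hw ha h1 h2 (t0-1)
  have hbRi : t0 ∉ Rf a i := by
    intro hmem
    have hstep := fcnt_lt_of_mem ha h1 (by omega) hmem ht01
    have hmod : cnt (x (i+1)) (t0-1) % 2 ≤ 1 := by omega
    omega
  have hbRi1 : t0 ∉ Rf a (i+1) := by
    intro hmem
    have hstep := fcnt_lt_of_mem ha (by omega) h2 hmem ht01
    have hmod : cnt (x (i+1)) t0 % 2 ≤ 1 := by omega
    omega
  have hcong := fcnt_congr ha h1 (by omega) hbRi ht01
  have hcntodd : cnt (x (i+1)) (t0-1) % 2 = 1 := by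
    have hmod : cnt (x (i+1)) (t0-1) % 2 ≤ 1 := by omega
    omega
  have hb2 : 2 ≤ t0 := by
    have hpos : 1 ≤ cnt (x (i+1)) (t0-1) := by omega
    obtain ⟨e, hemem, hele⟩ := cnt_pos_exists hpos
    have := hw.2.2.1 (i+1) (by omega) h2 e hemem
    omega
  exact ⟨t0, hb2, hbRi, hbRi1, ⟨a i j, mem_Rf.mpr ⟨j, hj1, by omega, rfl⟩, by omega⟩, hcntodd⟩

lemma pat_to_gapT (hw : IsGogWord n x) (ha : GogTriangle n x a) {l : ℕ}
    (h1 : 1 ≤ l) (h2 : l + 1 ≤ n) (hp : Pat x a l) : GapT x a l := by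
  obtain ⟨c, a', b, hc, ha', hab, hbc, hbl, hbl1, hact⟩ := hp
  have hs1 := hw.2.1 (l+1) (by omega) h2
  have hlen1 := hw.1 (l+1) (by omega) h2
  have hpos : ∀ v ∈ x (l+1), 1 ≤ v := fun v hv => (hw.2.2.1 (l+1) (by omega) h2 v hv).1
  obtain ⟨hcnt, hb2⟩ := cnt_of_active hs1 hlen1 hpos hact
  exact ⟨b, hb2, hbl, hbl1, ⟨c, mem_of_odd hw ha h1 (by omega) hc, hbc⟩, hcnt⟩

lemma main (hw : IsGogWord n x) (ha : GogTriangle n x a) :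
    ∀ l, 1 ≤ l → l + 1 ≤ n → (∀ l', 1 ≤ l' → l' < l → ¬ Pat x a l') →
      GapT x a l → Pat x a l := by
  intro l
  induction l using Nat.strong_induction_on with
  | _ l ih =>
  intro h1 h2 hno hg
  obtain ⟨b, hb2, hbl, hbl1, ⟨v, hv, hbv⟩, hodd⟩ := hg
  have hs1 := hw.2.1 (l+1) (by omega) h2
  have hlen1pos : 0 < (x (l+1)).length := by have := hw.1 (l+1) (by omega) h2; omega
  have hcpos : 1 ≤ cnt (x (l+1)) (b-1) := by omega
  have hcle : cnt (x (l+1)) (b-1) ≤ (x (l+1)).length := cnt_le _ _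
  have ha'le : (x (l+1)).getD 0 0 ≤ b - 1 :=
    (getD_le_iff (s := b - 1) hs1 hlen1pos).mpr (by omega)
  have ha'odd : OddPos (x (l+1)) ((x (l+1)).getD 0 0) := ⟨0, hlen1pos, rfl, rfl⟩
  have hbnm : b ∉ x (l+1) := by
    intro hmem
    rcases pos_split hmem with h | h
    · exact hbl1 (mem_of_odd hw ha (by omega) h2 h)
    · exact hbl (even_mem_prev hw ha h1 h2 h)
  have hact : ActiveWrt (x (l+1)) b := active_of_cnt hs1 hbnm (by omega) hodd
  by_cases hcex : ∃ c, OddPos (x l) c ∧ b < c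
  · obtain ⟨c, hco, hbc⟩ := hcex
    exact ⟨c, (x (l+1)).getD 0 0, b, hco, ha'odd, by omega, hbc, hbl, hbl1, hact⟩
  push_neg at hcex
  exfalso
  rcases Nat.lt_or_ge l 2 with hlsm | hl2
  · have hleq : l = 1 := by omega
    subst hleq
    rw [mem_Rf] at hv
    obtain ⟨j, hj1, hj2, he⟩ := hv
    have hj : j = 1 := by omega
    subst hj
    have hlen1 : 0 < (x 1).length := by have := hw.1 1 le_rfl (by omega); omega
    have hvodd : OddPos (x 1) v := ⟨0, hlen1, rfl, by rw [← ha.2.1 (by omega), he]⟩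
    have := hcex v hvodd
    omega
  obtain ⟨m, rfl⟩ : ∃ m, l = m + 1 := ⟨l - 1, by omega⟩
  have hm1 : 1 ≤ m := by omega
  have hsl := hw.2.1 (m+1) (by omega) (by omega)
  have hlenl := hw.1 (m+1) (by omega) (by omega)
  have hentry : ∀ e ∈ x (m+1), e ≤ b - 1 := by
    intro e he
    obtain ⟨mm, hmm, rfl⟩ := mem_idx he
    have hlast : OddPos (x (m+1)) ((x (m+1)).getD ((x (m+1)).length - 1) 0) :=
      ⟨(x (m+1)).length - 1, by omega, by omega, rfl⟩
    have hlastle : (x (m+1)).getD ((x (m+1)).length - 1) 0 ≤ b := hcex _ hlast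
    have hlastne : (x (m+1)).getD ((x (m+1)).length - 1) 0 ≠ b := by
      intro heq
      exact hbl (mem_of_odd hw ha (by omega) (by omega) (heq ▸ hlast))
    have hmmle : (x (m+1)).getD mm 0 ≤ (x (m+1)).getD ((x (m+1)).length - 1) 0 := by
      rcases eq_or_lt_of_le (by omega : mm ≤ (x (m+1)).length - 1) with heq | hlt
      · rw [heq]
      · exact le_of_lt (getD_lt hsl hlt (by omega))
    omega
  have hcnt_l : cnt (x (m+1)) (b-1) % 2 = 1 := by
    rw [cnt_full hentry]
    exact hlenl
  have hbm : b ∉ Rf a m := by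
    intro hmem
    have hbx : b ∈ x (m+1) := by
      by_contra hnm
      exact hbl ((mem_succ_iff hw ha hm1 (by omega) hnm).mpr hmem)
    have := hentry b hbx
    omega
  have hvm : v ∈ Rf a m := by
    by_contra hnm
    have hvx : v ∈ x (m+1) := by
      by_contra hnx
      exact hnm ((mem_succ_iff hw ha hm1 (by omega) hnx).mp hv)
    have := hentry v hvx
    omega
  have hgm : GapT x a m := ⟨b, hb2, hbm, hbl, ⟨v, hvm, hbv⟩, hcnt_l⟩
  have hpm : Pat x a m :=
    ih m (by omega) hm1 (by omega) (fun l' hl'1 hl'2 => hno l' hl'1 (by omega)) hgm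
  exact hno m hm1 (by omega) hpm

end Triangle2


end Gog312

/-- Let `w = x 1 … x n` be a Gog word with corresponding monotone triangle `a`, let
`1 ≤ i ≤ n - 1`, and assume `w` contains no 312-subpattern at any position `l < i`
(i.e. no 312-subpattern occurring at tuples `x l, x (l+1), x k` with `l < i`). Then
`w` contains a 312-subpattern at position `i` (occurring at tuples
`x i, x (i+1), x k` for some `k`) iff the triangle `a` has a gap at row `i`,
i.e. there is `j` with `a i j - a (i+1) j > 1`. -/
theorem subpattern312_at_iff_gap (n : ℕ) (x : ℕ → List ℕ) (a : ℕ → ℕ → ℕ)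
    (hw : IsGogWord n x) (ha : GogTriangle n x a)
    (i : ℕ) (hi1 : 1 ≤ i) (hi : i ≤ n - 1)
    (hno : ∀ c a' b l k, 1 ≤ l → l < i → k ≤ n → ¬ Is312At x c a' b l (l + 1) k) :
    (∃ c a' b k, k ≤ n ∧ Is312At x c a' b i (i + 1) k) ↔
    (∃ j, 1 ≤ j ∧ j ≤ i ∧ a (i + 1) j + 1 < a i j) := by
  have h2 : i + 1 ≤ n := by omega
  have hnoP : ∀ l, 1 ≤ l → l < i → ¬ Gog312.Pat x a l := by
    intro l hl1 hl2 hp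
    obtain ⟨c, a', b, k, hk, h312⟩ := Gog312.pat_to_312 hw ha hl1 (by omega) hp
    exact hno c a' b l k hl1 hl2 hk h312
  constructor
  · rintro ⟨c, a', b, k, hk, h312⟩
    exact Gog312.gapT_to_gap hw ha hi1 h2
      (Gog312.pat_to_gapT hw ha hi1 h2 (Gog312.p312_to_pat hw ha hi1 hk h312))
  · rintro ⟨j, hj1, hj2, hgap⟩
    exact Gog312.pat_to_312 hw ha hi1 h2
      (Gog312.main hw ha i hi1 h2 hnoP (Gog312.gap_to_gapT hw ha hi1 h2 hj1 hj2 hgap))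
end

section
/- Let w = x_1 ... x_n be a Gog word with corresponding monotone triangle a, let x_m = (p_1, q_1, ..., p_{k-1}, q_{k-1}, p_k) with k ≥ 2, and fix l < k. If p_l = a_{m,r}, q_l = a_{m-1,s} and p_{l+1} = a_{m,t} (i.e., r, s, t are the column positions of p_l in row m, of q_l in row m-1, and of p_{l+1} in row m, respectively), then r ≤ s < t. -/
namespace GogAux

def RowSet (a : ℕ → ℕ → ℕ) (i : ℕ) : Set ℕ := {v | ∃ j, 1 ≤ j ∧ j ≤ i ∧ a i j = v}

variable {n : ℕ} {x : ℕ → List ℕ} {a : ℕ → ℕ → ℕ}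

lemma getD_lt_getD {l : List ℕ} (h : List.Pairwise (· < ·) l) {i j : ℕ}
    (hij : i < j) (hj : j < l.length) : l.getD i 0 < l.getD j 0 := by
  rw [List.getD_eq_getElem l 0 (by omega), List.getD_eq_getElem l 0 hj]
  exact List.Pairwise.rel_get_of_lt h (by exact hij)

lemma mem_of_oddPos {l : List ℕ} {v : ℕ} (h : OddPos l v) : v ∈ l := by
  obtain ⟨j, hj, -, hv⟩ := h
  rw [← hv, List.getD_eq_getElem l 0 hj]
  exact List.getElem_mem _

lemma mem_of_evenPos {l : List ℕ} {v : ℕ} (h : EvenPos l v) : v ∈ l := by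
  obtain ⟨j, hj, -, hv⟩ := h
  rw [← hv, List.getD_eq_getElem l 0 hj]
  exact List.getElem_mem _

lemma odd_or_even {l : List ℕ} {v : ℕ} (h : v ∈ l) : OddPos l v ∨ EvenPos l v := by
  obtain ⟨j, hj, hv⟩ := List.mem_iff_getElem.1 h
  have hgd : l.getD j 0 = v := by rw [List.getD_eq_getElem l 0 hj]; exact hv
  rcases Nat.mod_two_eq_zero_or_one j with h2 | h2
  · exact Or.inl ⟨j, hj, h2, hgd⟩
  · exact Or.inr ⟨j, hj, h2, hgd⟩

lemma not_odd_of_even {l : List ℕ} {v : ℕ} (hs : List.Pairwise (· < ·) l)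
    (he : EvenPos l v) : ¬ OddPos l v := by
  rintro ⟨j, hj, hj2, hv⟩
  obtain ⟨j', hj', hj'2, hv'⟩ := he
  rcases Nat.lt_trichotomy j j' with h | h | h
  · have := getD_lt_getD hs h hj'; omega
  · omega
  · have := getD_lt_getD hs h hj; omega

lemma rowset_succ (ha : GogTriangle n x a) {i : ℕ} (h1 : 1 ≤ i) (h2 : i + 1 ≤ n) :
    RowSet a (i + 1) =
      (RowSet a i \ {v | EvenPos (x (i + 1)) v}) ∪ {v | OddPos (x (i + 1)) v} :=
  ha.2.2 i h1 h2

lemma x1_len (hw : IsGogWord n x) (hn : 1 ≤ n) : (x 1).length = 1 := by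
  have h1 := hw.1 1 le_rfl hn
  by_contra h
  have hlen : 2 ≤ (x 1).length := by omega
  have hEv : EvenPos (x 1) ((x 1).getD 1 0) := ⟨1, by omega, rfl, rfl⟩
  obtain ⟨⟨i', hi1, hi2, -⟩, -⟩ := hw.2.2.2.1 1 le_rfl hn _ hEv
  omega

lemma mem_row_of_odd (hw : IsGogWord n x) (ha : GogTriangle n x a) {i v : ℕ}
    (h1 : 1 ≤ i) (h2 : i ≤ n) (h : OddPos (x i) v) : v ∈ RowSet a i := by
  rcases Nat.lt_or_ge i 2 with hi | hi
  · have hi1 : i = 1 := by omega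
    subst hi1
    obtain ⟨j, hj, -, hv⟩ := h
    have hl1 := x1_len hw h2
    have hj0 : j = 0 := by omega
    refine ⟨1, le_rfl, le_rfl, ?_⟩
    rw [ha.2.1 h2, ← hv, hj0]
  · have heq := rowset_succ ha (i := i - 1) (by omega) (by omega)
    rw [show i - 1 + 1 = i by omega] at heq
    rw [heq]
    exact Or.inr h

lemma not_mem_row_of_even (hw : IsGogWord n x) (ha : GogTriangle n x a) {i v : ℕ}
    (h1 : 1 ≤ i) (h2 : i ≤ n) (hmem : v ∈ x i) (hno : ¬ OddPos (x i) v) :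
    v ∉ RowSet a i := by
  have hEv : EvenPos (x i) v := (odd_or_even hmem).resolve_left hno
  have hi2 : 2 ≤ i := by
    by_contra h
    have : i = 1 := by omega
    subst this
    obtain ⟨⟨i', hi1, hi2, -⟩, -⟩ := hw.2.2.2.1 1 le_rfl h2 v hEv
    omega
  have heq := rowset_succ ha (i := i - 1) (by omega) (by omega)
  rw [show i - 1 + 1 = i by omega] at heq
  rw [heq]
  rintro (⟨-, hv⟩ | hv)
  · exact hv hEv
  · exact hno hv

lemma row_persist (ha : GogTriangle n x a) {v : ℕ} :
    ∀ d i, 1 ≤ i → i + d ≤ n → (∀ j, i < j → j ≤ i + d → v ∉ x j) →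
      (v ∈ RowSet a (i + d) ↔ v ∈ RowSet a i) := by
  intro d
  induction d with
  | zero => intro i _ _ _; rfl
  | succ d ih =>
    intro i h1 h2 hno
    have hstep := rowset_succ ha (i := i + d) (by omega) (by omega)
    have hx : v ∉ x (i + d + 1) := hno _ (by omega) (by omega)
    have hnotE : ¬ EvenPos (x (i + d + 1)) v := fun h => hx (mem_of_evenPos h)
    have hnotO : ¬ OddPos (x (i + d + 1)) v := fun h => hx (mem_of_oddPos h)
    have hmid := ih i h1 (by omega) (fun j hj1 hj2 => hno j hj1 (by omega))
    have : v ∈ RowSet a (i + d + 1) ↔ v ∈ RowSet a (i + d) := by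
      rw [hstep]
      simp only [Set.mem_union, Set.mem_diff, Set.mem_setOf_eq]
      constructor
      · rintro (⟨hv, -⟩ | hv)
        · exact hv
        · exact absurd hv hnotO
      · intro hv; exact Or.inl ⟨hv, hnotE⟩
    rw [show i + (d + 1) = i + d + 1 by omega]
    exact this.trans hmid

lemma exists_occ_of_mem_row (hw : IsGogWord n x) (ha : GogTriangle n x a) {v : ℕ} :
    ∀ i, 1 ≤ i → i ≤ n → v ∈ RowSet a i → ∃ j, 1 ≤ j ∧ j ≤ i ∧ v ∈ x j := by
  intro i
  induction i with
  | zero => omega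
  | succ i ih =>
    intro h1 h2 hv
    rcases Nat.eq_zero_or_pos i with hi | hi
    · subst hi
      obtain ⟨j, hj1, hj2, hj3⟩ := hv
      have hj : j = 1 := by omega
      subst hj
      refine ⟨1, le_rfl, le_rfl, ?_⟩
      rw [← hj3, ha.2.1 h2]
      have hl1 := x1_len hw h2
      rw [List.getD_eq_getElem (x 1) 0 (by omega)]
      exact List.getElem_mem _
    · rw [rowset_succ ha hi h2] at hv
      rcases hv with ⟨hv', -⟩ | hv'
      · obtain ⟨j, hj1, hj2, hj3⟩ := ih hi (by omega) hv'
        exact ⟨j, hj1, by omega, hj3⟩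
      · exact ⟨i + 1, by omega, le_rfl, mem_of_oddPos hv'⟩

lemma exists_max_occ {v m : ℕ} (h : ∃ j, 1 ≤ j ∧ j < m ∧ v ∈ x j) :
    ∃ j, 1 ≤ j ∧ j < m ∧ v ∈ x j ∧ ∀ j', j < j' → j' < m → v ∉ x j' := by
  classical
  obtain ⟨j0, hj0, hj0m, hj0v⟩ := h
  have hspec : v ∈ x (Nat.findGreatest (fun j => v ∈ x j) (m - 1)) :=
    Nat.findGreatest_spec (P := fun j => v ∈ x j) (n := m - 1) (m := j0) (by omega) hj0v
  have hge : j0 ≤ Nat.findGreatest (fun j => v ∈ x j) (m - 1) :=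
    Nat.le_findGreatest (P := fun j => v ∈ x j) (by omega) hj0v
  have hle : Nat.findGreatest (fun j => v ∈ x j) (m - 1) ≤ m - 1 :=
    Nat.findGreatest_le _
  exact ⟨_, by omega, by omega, hspec,
    fun j' h1 h2 hmem => Nat.findGreatest_is_greatest h1 (by omega) hmem⟩

lemma even_mem_prev_row (hw : IsGogWord n x) (ha : GogTriangle n x a) {m v : ℕ}
    (hm : 2 ≤ m) (hmn : m ≤ n) (hE : EvenPos (x m) v) : v ∈ RowSet a (m - 1) := by
  obtain ⟨⟨i0, hi01, hi0m, hi0odd⟩, -⟩ := hw.2.2.2.1 m (by omega) hmn v hE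
  obtain ⟨J, hJ1, hJm, hJmem, hJmax⟩ :=
    exists_max_occ (x := x) (m := m) ⟨i0, hi01, hi0m, mem_of_oddPos hi0odd⟩
  have halt := hw.2.2.2.2 v J m hJ1 hJm hmn hJmem (mem_of_evenPos hE) hJmax
  have hnotO : ¬ OddPos (x m) v := not_odd_of_even (hw.2.1 m (by omega) hmn) hE
  have hOJ : OddPos (x J) v := halt.2 hnotO
  have hrow := mem_row_of_odd hw ha hJ1 (by omega) hOJ
  have hp := row_persist ha (d := m - 1 - J) (i := J) hJ1 (by omega)
    (fun j hj1 hj2 => hJmax j hj1 (by omega))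
  rw [show J + (m - 1 - J) = m - 1 by omega] at hp
  exact hp.2 hrow

lemma odd_not_mem_prev_row (hw : IsGogWord n x) (ha : GogTriangle n x a) {m v : ℕ}
    (hm : 2 ≤ m) (hmn : m ≤ n) (hO : OddPos (x m) v) : v ∉ RowSet a (m - 1) := by
  intro hmem
  obtain ⟨j0, hj01, hj0m, hj0v⟩ :=
    exists_occ_of_mem_row hw ha (m - 1) (by omega) (by omega) hmem
  obtain ⟨J, hJ1, hJm, hJmem, hJmax⟩ :=
    exists_max_occ (x := x) (m := m) ⟨j0, hj01, by omega, hj0v⟩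
  have halt := hw.2.2.2.2 v J m hJ1 hJm hmn hJmem (mem_of_oddPos hO) hJmax
  have hnotOJ : ¬ OddPos (x J) v := fun h => (halt.1 h) hO
  have hnot := not_mem_row_of_even hw ha hJ1 (by omega) hJmem hnotOJ
  have hp := row_persist ha (d := m - 1 - J) (i := J) hJ1 (by omega)
    (fun j hj1 hj2 => hJmax j hj1 (by omega))
  rw [show J + (m - 1 - J) = m - 1 by omega] at hp
  exact hnot (hp.1 hmem)

end GogAux

/-- Let `w = x 1 … x n` be a Gog word with corresponding monotone triangle `a`, let
`x m = (p 1, q 1, …, p (k-1), q (k-1), p k)` with `k ≥ 2` and fix `1 ≤ l < k`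
(so `p l`, `q l`, `p (l+1)` are the entries of `x m` at 0-based indices
`2l - 2`, `2l - 1`, `2l`). If `p l = a m r`, `q l = a (m-1) s` and `p (l+1) = a m t`,
then `r ≤ s < t`. -/
theorem columns_of_p_q_p (n : ℕ) (x : ℕ → List ℕ) (a : ℕ → ℕ → ℕ)
    (hw : IsGogWord n x) (ha : GogTriangle n x a)
    (m k l : ℕ) (hm2 : 2 ≤ m) (hmn : m ≤ n)
    (hk2 : 2 ≤ k) (hlen : (x m).length = 2 * k - 1) (hl1 : 1 ≤ l) (hlk : l < k)
    (r s t : ℕ)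
    (hr1 : 1 ≤ r) (hrm : r ≤ m) (hr : a m r = (x m).getD (2 * l - 2) 0)
    (hs1 : 1 ≤ s) (hsm : s ≤ m - 1) (hs : a (m - 1) s = (x m).getD (2 * l - 1) 0)
    (ht1 : 1 ≤ t) (htm : t ≤ m) (ht : a m t = (x m).getD (2 * l) 0) :
    r ≤ s ∧ s < t := by
  classical
  have hm11 : 1 ≤ m - 1 := by omega
  have hm1n : m - 1 ≤ n := by omega
  have hsorted := hw.2.1 m (by omega) hmn
  -- key value inequalities
  have hpq : (x m).getD (2 * l - 2) 0 < (x m).getD (2 * l - 1) 0 :=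
    GogAux.getD_lt_getD hsorted (by omega) (by omega)
  have hqP : (x m).getD (2 * l - 1) 0 < (x m).getD (2 * l) 0 :=
    GogAux.getD_lt_getD hsorted (by omega) (by omega)
  -- characterizations of odd/even positions
  have hOddI : ∀ v, OddPos (x m) v ↔ ∃ c, c < k ∧ (x m).getD (2 * c) 0 = v := by
    intro v
    constructor
    · rintro ⟨j, hj, hj2, hv⟩
      exact ⟨j / 2, by omega, by rw [show 2 * (j / 2) = j by omega]; exact hv⟩
    · rintro ⟨c, hc, hv⟩
      exact ⟨2 * c, by omega, by omega, hv⟩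
  have hEvenI : ∀ v, EvenPos (x m) v ↔ ∃ c, c < k - 1 ∧ (x m).getD (2 * c + 1) 0 = v := by
    intro v
    constructor
    · rintro ⟨j, hj, hj2, hv⟩
      exact ⟨j / 2, by omega, by rw [show 2 * (j / 2) + 1 = j by omega]; exact hv⟩
    · rintro ⟨c, hc, hv⟩
      exact ⟨2 * c + 1, by omega, by omega, hv⟩
  -- the row recurrence at m
  have hrec : GogAux.RowSet a m =
      (GogAux.RowSet a (m - 1) \ {v | EvenPos (x m) v}) ∪ {v | OddPos (x m) v} := by
    have h := GogAux.rowset_succ ha (i := m - 1) hm11 (by omega)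
    rwa [show m - 1 + 1 = m by omega] at h
  -- cardinality of prefix images
  have hcard : ∀ i u, 1 ≤ i → i ≤ n → u ≤ i →
      ((Finset.Icc 1 u).image (a i)).card = u := by
    intro i u h1 h2 h3
    rw [Finset.card_image_of_injOn, Nat.card_Icc]
    · omega
    · intro b hb b' hb' hbb'
      simp only [Finset.coe_Icc, Set.mem_Icc] at hb hb'
      by_contra hne
      rcases Nat.lt_or_ge b b' with h | h
      · exact absurd hbb' (ne_of_lt (ha.1 i h1 h2 b b' hb.1 h (by omega)))
      · exact absurd hbb'.symm (ne_of_lt (ha.1 i h1 h2 b' b hb'.1 (by omega) (by omega)))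
  -- prefix image members are row members
  have hmemA : ∀ u v, u ≤ m - 1 → v ∈ (Finset.Icc 1 u).image (a (m - 1)) →
      v ∈ GogAux.RowSet a (m - 1) := by
    intro u v hu hv
    obtain ⟨j, hj, rfl⟩ := Finset.mem_image.1 hv
    rw [Finset.mem_Icc] at hj
    exact ⟨j, hj.1, by omega, rfl⟩
  -- row-m members bounded by a m t are in the t-prefix
  have hrowm_toT : ∀ v, v ∈ GogAux.RowSet a m → v ≤ a m t →
      v ∈ (Finset.Icc 1 t).image (a m) := by
    rintro v ⟨j, hj1, hjm, rfl⟩ hle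
    refine Finset.mem_image.2 ⟨j, Finset.mem_Icc.2 ⟨hj1, ?_⟩, rfl⟩
    by_contra hc
    have := ha.1 m (by omega) hmn t j ht1 (by omega) hjm
    omega
  -- row-(m-1) members below a (m-1) s are in the (s-1)-prefix
  have hprev_toC : ∀ v, v ∈ GogAux.RowSet a (m - 1) → v < a (m - 1) s →
      v ∈ (Finset.Icc 1 (s - 1)).image (a (m - 1)) := by
    rintro v ⟨j, hj1, hjm, rfl⟩ hlt
    refine Finset.mem_image.2 ⟨j, Finset.mem_Icc.2 ⟨hj1, ?_⟩, rfl⟩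
    by_contra hc
    have hsj : s ≤ j := by omega
    rcases Nat.eq_or_lt_of_le hsj with h | h
    · rw [← h] at hlt; exact lt_irrefl _ hlt
    · have := ha.1 (m - 1) hm11 hm1n s j hs1 h hjm
      omega
  -- elements of the s-prefix of row m-1 are ≤ a (m-1) s
  have hA_le : ∀ v ∈ (Finset.Icc 1 s).image (a (m - 1)), v ≤ a (m - 1) s := by
    intro v hv
    obtain ⟨j, hj, rfl⟩ := Finset.mem_image.1 hv
    rw [Finset.mem_Icc] at hj
    rcases Nat.eq_or_lt_of_le hj.2 with h | h
    · rw [h]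
    · exact le_of_lt (ha.1 (m - 1) hm11 hm1n j s hj.1 h hsm)
  -- main finsets
  set Qfin : Finset ℕ := (Finset.range (k - 1)).image (fun c => (x m).getD (2 * c + 1) 0)
    with hQfin
  set Pl : Finset ℕ := (Finset.range l).image (fun c => (x m).getD (2 * c) 0) with hPl
  have hQfin_even : ∀ v ∈ Qfin, EvenPos (x m) v := by
    intro v hv
    obtain ⟨c, hc, rfl⟩ := Finset.mem_image.1 hv
    rw [Finset.mem_range] at hc
    exact (hEvenI _).2 ⟨c, hc, rfl⟩
  have hQfin_of_even : ∀ v, EvenPos (x m) v → v ∈ Qfin := by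
    intro v hv
    obtain ⟨c, hc, hcv⟩ := (hEvenI v).1 hv
    exact Finset.mem_image.2 ⟨c, Finset.mem_range.2 hc, hcv⟩
  have hPl_odd : ∀ v ∈ Pl, OddPos (x m) v := by
    intro v hv
    obtain ⟨c, hc, rfl⟩ := Finset.mem_image.1 hv
    rw [Finset.mem_range] at hc
    exact (hOddI _).2 ⟨c, by omega, rfl⟩
  have hPl_le : ∀ v ∈ Pl, v ≤ (x m).getD (2 * l - 2) 0 := by
    intro v hv
    obtain ⟨c, hc, rfl⟩ := Finset.mem_image.1 hv
    rw [Finset.mem_range] at hc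
    rcases Nat.eq_or_lt_of_le (show 2 * c ≤ 2 * l - 2 by omega) with h | h
    · rw [h]
    · exact le_of_lt (GogAux.getD_lt_getD hsorted h (by omega))
  have hPl_notrow : ∀ v ∈ Pl, v ∉ GogAux.RowSet a (m - 1) := fun v hv =>
    GogAux.odd_not_mem_prev_row hw ha hm2 hmn (hPl_odd v hv)
  have hcardPl : Pl.card = l := by
    rw [hPl, Finset.card_image_of_injOn, Finset.card_range]
    intro b hb b' hb' hbb'
    simp only [Finset.coe_range, Set.mem_Iio] at hb hb'
    by_contra hne
    rcases Nat.lt_or_ge b b' with h | h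
    · exact absurd hbb' (ne_of_lt (GogAux.getD_lt_getD hsorted (by omega) (by omega)))
    · exact absurd hbb'.symm (ne_of_lt (GogAux.getD_lt_getD hsorted (by omega) (by omega)))
  ----------------------------------------------------------------
  -- Part 1 : s < t
  ----------------------------------------------------------------
  have hst : s < t := by
    set Afin : Finset ℕ := (Finset.Icc 1 s).image (a (m - 1)) with hAfin
    have hsub1 : insert ((x m).getD (2 * l) 0) ((Afin \ Qfin) ∪ Pl) ⊆
        (Finset.Icc 1 t).image (a m) := by
      intro v hv
      rcases Finset.mem_insert.1 hv with rfl | hv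
      · refine hrowm_toT _ ?_ (by rw [ht])
        rw [hrec]
        exact Or.inr ((hOddI _).2 ⟨l, by omega, rfl⟩)
      rcases Finset.mem_union.1 hv with hv | hv
      · obtain ⟨hvA, hvQ⟩ := Finset.mem_sdiff.1 hv
        refine hrowm_toT _ ?_ ?_
        · rw [hrec]
          exact Or.inl ⟨hmemA s v hsm hvA, fun hE => hvQ (hQfin_of_even v hE)⟩
        · have := hA_le v hvA
          rw [hs] at this
          omega
      · refine hrowm_toT _ ?_ ?_
        · rw [hrec]; exact Or.inr (hPl_odd v hv)
        · have := hPl_le v hv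
          omega
    have hPnot : (x m).getD (2 * l) 0 ∉ (Afin \ Qfin) ∪ Pl := by
      intro hv
      rcases Finset.mem_union.1 hv with hv | hv
      · have := hA_le _ (Finset.mem_sdiff.1 hv).1
        rw [hs] at this
        omega
      · have := hPl_le _ hv
        omega
    have hdisj1 : Disjoint (Afin \ Qfin) Pl := by
      rw [Finset.disjoint_left]
      intro v hv hvP
      exact hPl_notrow v hvP (hmemA s v hsm (Finset.mem_sdiff.1 hv).1)
    have hAQ : (Afin ∩ Qfin).card ≤ l := by
      have hsub : Afin ∩ Qfin ⊆ (Finset.range l).image (fun c => (x m).getD (2 * c + 1) 0) := by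
        intro v hv
        obtain ⟨hvA, hvQ⟩ := Finset.mem_inter.1 hv
        obtain ⟨c, hc, rfl⟩ := Finset.mem_image.1 hvQ
        rw [Finset.mem_range] at hc
        have hle := hA_le _ hvA
        rw [hs] at hle
        have hcl : c < l := by
          by_contra hcl
          have : (x m).getD (2 * l - 1) 0 < (x m).getD (2 * c + 1) 0 :=
            GogAux.getD_lt_getD hsorted (by omega) (by omega)
          omega
        exact Finset.mem_image.2 ⟨c, Finset.mem_range.2 hcl, rfl⟩
      calc (Afin ∩ Qfin).card ≤ _ := Finset.card_le_card hsub
        _ ≤ l := le_trans Finset.card_image_le (by rw [Finset.card_range])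
    have hcardA : Afin.card = s := hcard (m - 1) s hm11 hm1n hsm
    have hsplit : Afin.card ≤ (Afin \ Qfin).card + (Afin ∩ Qfin).card := by
      have : Afin ⊆ (Afin \ Qfin) ∪ (Afin ∩ Qfin) := by
        intro v hv
        by_cases hq : v ∈ Qfin
        · exact Finset.mem_union.2 (Or.inr (Finset.mem_inter.2 ⟨hv, hq⟩))
        · exact Finset.mem_union.2 (Or.inl (Finset.mem_sdiff.2 ⟨hv, hq⟩))
      exact le_trans (Finset.card_le_card this) (Finset.card_union_le _ _)
    have hcardT : ((Finset.Icc 1 t).image (a m)).card = t := hcard m t (by omega) hmn htm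
    have hcardins : (insert ((x m).getD (2 * l) 0) ((Afin \ Qfin) ∪ Pl)).card =
        (Afin \ Qfin).card + Pl.card + 1 := by
      rw [Finset.card_insert_of_notMem hPnot, Finset.card_union_of_disjoint hdisj1]
    have hle := Finset.card_le_card hsub1
    rw [hcardins, hcardT, hcardPl] at hle
    omega
  ----------------------------------------------------------------
  -- Part 2 : r ≤ s
  ----------------------------------------------------------------
  have hrs : r ≤ s := by
    set Bfin : Finset ℕ := ((Finset.Icc 1 (m - 1)).image (a (m - 1))).filter
      (fun v => v ≤ a m r ∧ v ∉ Qfin) with hBfin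
    set Ql' : Finset ℕ := (Finset.range (l - 1)).image (fun c => (x m).getD (2 * c + 1) 0)
      with hQl'
    have hsub2 : (Finset.Icc 1 r).image (a m) ⊆ Bfin ∪ Pl := by
      intro v hv
      obtain ⟨j, hj, rfl⟩ := Finset.mem_image.1 hv
      rw [Finset.mem_Icc] at hj
      have hle : a m j ≤ a m r := by
        rcases Nat.eq_or_lt_of_le hj.2 with h | h
        · rw [h]
        · exact le_of_lt (ha.1 m (by omega) hmn j r hj.1 h hrm)
      have hrow : a m j ∈ GogAux.RowSet a m := ⟨j, hj.1, by omega, rfl⟩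
      rw [hrec] at hrow
      rcases hrow with ⟨hrow', hnotE⟩ | hodd
      · obtain ⟨j', hj'1, hj'2, hj'3⟩ := hrow'
        refine Finset.mem_union.2 (Or.inl (Finset.mem_filter.2 ⟨?_, hle, ?_⟩))
        · exact Finset.mem_image.2 ⟨j', Finset.mem_Icc.2 ⟨hj'1, hj'2⟩, hj'3⟩
        · exact fun hq => hnotE (hQfin_even _ hq)
      · obtain ⟨c, hc, hcv⟩ := (hOddI _).1 hodd
        have hcl : c < l := by
          by_contra hcl
          have : (x m).getD (2 * l - 2) 0 < (x m).getD (2 * c) 0 :=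
            GogAux.getD_lt_getD hsorted (by omega) (by omega)
          rw [hr] at hle
          omega
        exact Finset.mem_union.2 (Or.inr (Finset.mem_image.2 ⟨c, Finset.mem_range.2 hcl, hcv⟩))
    have hsub3 : Bfin ∪ Ql' ⊆ (Finset.Icc 1 (s - 1)).image (a (m - 1)) := by
      intro v hv
      rcases Finset.mem_union.1 hv with hv | hv
      · obtain ⟨hvim, hvle, -⟩ := Finset.mem_filter.1 hv
        refine hprev_toC v (hmemA (m - 1) v le_rfl hvim) ?_
        rw [hs, hr] at *
        omega
      · obtain ⟨c, hc, rfl⟩ := Finset.mem_image.1 hv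
        rw [Finset.mem_range] at hc
        have hEv : EvenPos (x m) ((x m).getD (2 * c + 1) 0) :=
          (hEvenI _).2 ⟨c, by omega, rfl⟩
        refine hprev_toC _ (GogAux.even_mem_prev_row hw ha hm2 hmn hEv) ?_
        rw [hs]
        exact GogAux.getD_lt_getD hsorted (by omega) (by omega)
    have hdisj2 : Disjoint Bfin Ql' := by
      rw [Finset.disjoint_left]
      intro v hv hv'
      obtain ⟨-, -, hnq⟩ := Finset.mem_filter.1 hv
      obtain ⟨c, hc, rfl⟩ := Finset.mem_image.1 hv'
      rw [Finset.mem_range] at hc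
      exact hnq (Finset.mem_image.2 ⟨c, Finset.mem_range.2 (by omega), rfl⟩)
    have hcardQl' : Ql'.card = l - 1 := by
      rw [hQl', Finset.card_image_of_injOn, Finset.card_range]
      intro b hb b' hb' hbb'
      simp only [Finset.coe_range, Set.mem_Iio] at hb hb'
      by_contra hne
      rcases Nat.lt_or_ge b b' with h | h
      · exact absurd hbb' (ne_of_lt (GogAux.getD_lt_getD hsorted (by omega) (by omega)))
      · exact absurd hbb'.symm (ne_of_lt (GogAux.getD_lt_getD hsorted (by omega) (by omega)))
    have hcardC : ((Finset.Icc 1 (s - 1)).image (a (m - 1))).card = s - 1 :=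
      hcard (m - 1) (s - 1) hm11 hm1n (by omega)
    have hcardR : ((Finset.Icc 1 r).image (a m)).card = r := hcard m r (by omega) hmn hrm
    have h1 := Finset.card_le_card hsub2
    have h2 := Finset.card_le_card hsub3
    rw [Finset.card_union_of_disjoint hdisj2, hcardQl', hcardC] at h2
    rw [hcardR] at h1
    have h3 := le_trans h1 (Finset.card_union_le _ _)
    rw [hcardPl] at h3
    omega
  exact ⟨hrs, hst⟩
end
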